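/- Every minimal k-polar obstruction has at most k+2 connected components. -/

import Mathlib

/-- A graph is `(s,k)`-polar if its vertices can be partitioned into `A` (fibers of `f` below `s`)
inducing a complete multipartite graph with at most `s` parts, and `B` (fibers in `[s, s+k)`)
inducing a disjoint union of at most `k` cliques, with no edges between distinct parts of `B`
and all edges between distinct parts of `A`. -/
def IsSKPolar {V : Type*} (G : SimpleGraph V) (s k : ℕ) : Prop :=
  ∃ f : V → ℕ, (∀ v, f v < s + k) ∧
    (∀ u v, u ≠ v → f u < s → f v < s → (G.Adj u v ↔ f u ≠ f v)) ∧
    (∀ u v, u ≠ v → s ≤ f u → s ≤ f v → (G.Adj u v ↔ f u = f v))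

/-- A minimal `(s,k)`-polar obstruction: not `(s,k)`-polar, but every proper induced
subgraph is `(s,k)`-polar. -/
def IsMinimalPolarObstruction {V : Type*} (G : SimpleGraph V) (s k : ℕ) : Prop :=
  ¬ IsSKPolar G s k ∧ ∀ S : Set V, S ≠ Set.univ → IsSKPolar (G.induce S) s k

/-- Core extraction lemma: if after deleting a vertex `v` the rest of `G` is colored by a
`(k,k)`-polar coloring `g`, and `G` has at least `k+3` components, then there is a vertex `a`
outside the component of `v`, whose `g`-value lies in the multipartite side, such that every
vertex reachable from `a` lies in the multipartite side, and moreover the multipartite side is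
single-valued (all `g`-values below `k` are equal to `g a`). -/
lemma isSKPolar_aux {V : Type*} [Fintype V] {k : ℕ} (G : SimpleGraph V)
    (hcard : k + 3 ≤ Nat.card G.ConnectedComponent) (v : V) (g : V → ℕ)
    (hbound : ∀ u, u ≠ v → g u < k + k)
    (hA : ∀ u w, u ≠ v → w ≠ v → u ≠ w → g u < k → g w < k → (G.Adj u w ↔ g u ≠ g w))
    (hB : ∀ u w, u ≠ v → w ≠ v → u ≠ w → k ≤ g u → k ≤ g w → (G.Adj u w ↔ g u = g w)) :
    ∃ a, a ≠ v ∧ ¬G.Reachable a v ∧ g a < k ∧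
      (∀ u, u ≠ v → G.Reachable u a → g u < k) ∧
      (∀ u, u ≠ v → g u < k → g u = g a) := by
  classical
  have hfin : Finite G.ConnectedComponent := Quot.finite _
  letI : Fintype G.ConnectedComponent := Fintype.ofFinite _
  -- a finset of k+3 distinct components
  obtain ⟨F, -, hF⟩ := Finset.exists_subset_card_eq (s := (Finset.univ : Finset G.ConnectedComponent))
    (n := k + 3) (by rw [Finset.card_univ, ← Nat.card_eq_fintype_card]; exact hcard)
  set cc : V → G.ConnectedComponent := G.connectedComponentMk with hcc
  -- the components touched by the "cliques" side
  set T : Finset G.ConnectedComponent :=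
    (Finset.Ico k (k + k)).image
      (fun c => if h : ∃ u, u ≠ v ∧ g u = c then cc h.choose else cc v) with hT
  have hTcard : T.card ≤ k := by
    refine le_trans Finset.card_image_le ?_
    rw [Nat.card_Ico]; omega
  have hmemT : ∀ u, u ≠ v → k ≤ g u → cc u ∈ T := by
    intro u hu hku
    have hIco : g u ∈ Finset.Ico k (k + k) := by
      rw [Finset.mem_Ico]; exact ⟨hku, hbound u hu⟩
    refine Finset.mem_image.mpr ⟨g u, hIco, ?_⟩
    have hex : ∃ w, w ≠ v ∧ g w = g u := ⟨u, hu, rfl⟩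
    rw [dif_pos hex]
    obtain ⟨hw1, hw2⟩ := hex.choose_spec
    have hkw : k ≤ g hex.choose := by rw [hw2]; exact hku
    by_cases hwu : hex.choose = u
    · rw [hwu]
    · exact (SimpleGraph.ConnectedComponent.eq).mpr
        (((hB _ _ hw1 hu hwu hkw hku).mpr hw2).reachable)
  -- at least two components, distinct from that of v, avoid T
  have hbig : 1 < ((F.erase (cc v)) \ T).card := by
    have h1 : k + 2 ≤ (F.erase (cc v)).card := by
      have := Finset.pred_card_le_card_erase (s := F) (a := cc v)
      omega
    have h2 := Finset.le_card_sdiff T (F.erase (cc v))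
    omega
  obtain ⟨ca, hca, cb, hcb, hcab⟩ := Finset.one_lt_card.mp hbig
  obtain ⟨a, ha⟩ := ca.exists_rep
  obtain ⟨b, hb⟩ := cb.exists_rep
  have ha' : G.connectedComponentMk a = ca := ha
  have hb' : G.connectedComponentMk b = cb := hb
  rw [Finset.mem_sdiff, Finset.mem_erase] at hca hcb
  have haT : cc a ∉ T := by rw [hcc]; show G.connectedComponentMk a ∉ T; rw [ha']; exact hca.2
  have hbT : cc b ∉ T := by rw [hcc]; show G.connectedComponentMk b ∉ T; rw [hb']; exact hcb.2
  have hav : ¬G.Reachable a v := by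
    intro h
    exact hca.1.1 (by rw [← ha']; exact SimpleGraph.ConnectedComponent.eq.mpr h)
  have hbv : ¬G.Reachable b v := by
    intro h
    exact hcb.1.1 (by rw [← hb']; exact SimpleGraph.ConnectedComponent.eq.mpr h)
  have hane : a ≠ v := fun h => hav (h ▸ SimpleGraph.Reachable.refl a)
  have hbne : b ≠ v := fun h => hbv (h ▸ SimpleGraph.Reachable.refl b)
  have hab : ¬G.Reachable a b := by
    intro h
    apply hcab
    rw [← ha', ← hb']
    exact SimpleGraph.ConnectedComponent.eq.mpr h
  -- every vertex reachable from a (resp. b) has small value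
  have hsmalla : ∀ u, u ≠ v → G.Reachable u a → g u < k := by
    intro u hu hr
    by_contra h
    apply haT
    show G.connectedComponentMk a ∈ T
    rw [← SimpleGraph.ConnectedComponent.eq.mpr hr]
    exact hmemT u hu (le_of_not_gt h)
  have hsmallb : ∀ u, u ≠ v → G.Reachable u b → g u < k := by
    intro u hu hr
    by_contra h
    apply hbT
    show G.connectedComponentMk b ∈ T
    rw [← SimpleGraph.ConnectedComponent.eq.mpr hr]
    exact hmemT u hu (le_of_not_gt h)
  have hga : g a < k := hsmalla a hane (SimpleGraph.Reachable.refl a)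
  have hgb : g b < k := hsmallb b hbne (SimpleGraph.Reachable.refl b)
  have haneb : a ≠ b := fun h => hab (h ▸ SimpleGraph.Reachable.refl a)
  have hgab : g a = g b := by
    by_contra h
    exact hab (((hA a b hane hbne haneb hga hgb).mpr h).reachable)
  refine ⟨a, hane, hav, hga, hsmalla, ?_⟩
  intro u hu hgu
  by_cases hr : G.Reachable u a
  · have hrb : ¬G.Reachable u b := fun h => hab (hr.symm.trans h)
    have hub : u ≠ b := fun h => hrb (h ▸ SimpleGraph.Reachable.refl u)
    have : g u = g b := by
      by_contra h
      exact hrb (((hA u b hu hbne hub hgu hgb).mpr h).reachable)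
    rw [this, hgab]
  · have hua : u ≠ a := fun h => hr (h ▸ SimpleGraph.Reachable.refl u)
    by_contra h
    exact hr (((hA u a hu hane hua hgu hga).mpr h).reachable)

/-- Deleting a vertex of a minimal obstruction gives a coloring of the rest of `G`. -/
lemma isSKPolar_delete {V : Type*} {k : ℕ} (G : SimpleGraph V)
    (hG : IsMinimalPolarObstruction G k k) (v : V) :
    ∃ g : V → ℕ, (∀ u, u ≠ v → g u < k + k) ∧
      (∀ u w, u ≠ v → w ≠ v → u ≠ w → g u < k → g w < k → (G.Adj u w ↔ g u ≠ g w)) ∧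
      (∀ u w, u ≠ v → w ≠ v → u ≠ w → k ≤ g u → k ≤ g w → (G.Adj u w ↔ g u = g w)) := by
  classical
  have hS : ({u : V | u ≠ v} : Set V) ≠ Set.univ := by
    intro h
    have : v ∈ ({u : V | u ≠ v} : Set V) := h ▸ Set.mem_univ v
    exact this rfl
  obtain ⟨f, hf1, hf2, hf3⟩ := hG.2 {u : V | u ≠ v} hS
  refine ⟨fun u => if h : u ≠ v then f ⟨u, h⟩ else 0, fun u hu => by simpa [hu] using hf1 ⟨u, hu⟩,
    ?_, ?_⟩
  · intro u w hu hw huw h1 h2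
    dsimp only at h1 h2 ⊢
    rw [dif_pos hu] at h1; rw [dif_pos hw] at h2
    have := hf2 ⟨u, hu⟩ ⟨w, hw⟩ (by simpa using huw) h1 h2
    simpa [hu, hw] using this
  · intro u w hu hw huw h1 h2
    dsimp only at h1 h2 ⊢
    rw [dif_pos hu] at h1; rw [dif_pos hw] at h2
    have := hf3 ⟨u, hu⟩ ⟨w, hw⟩ (by simpa using huw) h1 h2
    simpa [hu, hw] using this

/-- Every minimal `k`-polar obstruction has at most `k + 2` connected components. -/
theorem minimal_kPolar_obstruction_components_le {k : ℕ} (hk : 0 < k)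
    {V : Type*} [Fintype V] (G : SimpleGraph V)
    (hG : IsMinimalPolarObstruction G k k) :
    Nat.card G.ConnectedComponent ≤ k + 2 := by
  classical
  by_contra hcon
  have hcard : k + 3 ≤ Nat.card G.ConnectedComponent := by omega
  -- V is nonempty
  have hne : Nonempty G.ConnectedComponent := by
    have : 0 < Nat.card G.ConnectedComponent := by omega
    exact Nat.card_pos_iff.mp this |>.1
  obtain ⟨c0⟩ := hne
  obtain ⟨v0, -⟩ := c0.exists_rep
  -- Step 1: find an isolated vertex x
  obtain ⟨g1, hb1, hA1, hB1⟩ := isSKPolar_delete G hG v0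
  obtain ⟨x, hxv, hxrv, hgx, hsmall, hsingle⟩ := isSKPolar_aux G hcard v0 g1 hb1 hA1 hB1
  have hiso : ∀ w, ¬G.Adj x w := by
    intro w hadj
    have hwv : w ≠ v0 := by
      rintro rfl
      exact hxrv hadj.reachable
    have hwr : G.Reachable w x := hadj.symm.reachable
    have hgw : g1 w < k := hsmall w hwv hwr
    have := (hA1 x w hxv hwv hadj.ne hgx hgw).mp hadj
    exact this (hsingle w hwv hgw).symm
  -- Step 2: delete x and extend the coloring to all of G
  obtain ⟨g2, hb2, hA2, hB2⟩ := isSKPolar_delete G hG x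
  obtain ⟨a, hav, -, hga, -, hsingle2⟩ := isSKPolar_aux G hcard x g2 hb2 hA2 hB2
  apply hG.1
  refine ⟨fun u => if u = x then g2 a else g2 u, ?_, ?_, ?_⟩
  · intro u
    dsimp only
    by_cases h : u = x
    · rw [if_pos h]; omega
    · rw [if_neg h]; exact hb2 u h
  · intro u w huw h1 h2
    dsimp only at h1 h2 ⊢
    by_cases hu : u = x
    · have hw : w ≠ x := fun h => huw (h ▸ hu)
      rw [if_pos hu] at h1 ⊢
      rw [if_neg hw] at h2 ⊢
      have hval : g2 w = g2 a := hsingle2 w hw h2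
      have hnadj : ¬G.Adj u w := hu ▸ hiso w
      simp [hval, hnadj]
    · by_cases hw : w = x
      · rw [if_pos hw] at h2 ⊢
        rw [if_neg hu] at h1 ⊢
        have hval : g2 u = g2 a := hsingle2 u hu h1
        have hnadj : ¬G.Adj u w := fun h => (hw ▸ hiso u) h.symm
        simp [hval, hnadj]
      · rw [if_neg hu] at h1 ⊢
        rw [if_neg hw] at h2 ⊢
        exact hA2 u w hu hw huw h1 h2
  · intro u w huw h1 h2
    dsimp only at h1 h2 ⊢
    by_cases hu : u = x
    · rw [if_pos hu] at h1; omega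
    · by_cases hw : w = x
      · rw [if_pos hw] at h2; omega
      · rw [if_neg hu] at h1 ⊢
        rw [if_neg hw] at h2 ⊢
        exact hB2 u w hu hw huw h1 h2
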